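/- For a simple, smooth, closed, positively oriented plane curve γ = (x, y) : [0,1] → ℝ², the area of the enclosed region is −∮ y dx = −∫₀¹ y(s) x'(s) ds; applied to the rational quadratic parameterization of the unit circle (the four quarter-circle Bézier arcs), the sum of −∫₀¹ yᵢ(s) xᵢ'(s) ds over the four arcs equals π. -/

import Mathlib

open intervalIntegral

/-- Denominator of the rational quadratic quarter-circle parameterization. -/
noncomputable def circW (s : ℝ) : ℝ :=
  1 + (Real.sqrt 2 - 2) * s + (2 - Real.sqrt 2) * s ^ 2

/-- First coordinate of the quarter-circle arc. -/
noncomputable def circX (s : ℝ) : ℝ :=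
  (1 + (Real.sqrt 2 - 2) * s + (1 - Real.sqrt 2) * s ^ 2) / circW s

/-- Second coordinate of the quarter-circle arc. -/
noncomputable def circY (s : ℝ) : ℝ :=
  (Real.sqrt 2 * s + (1 - Real.sqrt 2) * s ^ 2) / circW s

noncomputable def dX (s : ℝ) : ℝ :=
  ((Real.sqrt 2 - 2 + (1 - Real.sqrt 2) * (2 * s)) * circW s -
      (1 + (Real.sqrt 2 - 2) * s + (1 - Real.sqrt 2) * s ^ 2) *
        (Real.sqrt 2 - 2 + (2 - Real.sqrt 2) * (2 * s))) / circW s ^ 2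

noncomputable def dY (s : ℝ) : ℝ :=
  ((Real.sqrt 2 + (1 - Real.sqrt 2) * (2 * s)) * circW s -
      (Real.sqrt 2 * s + (1 - Real.sqrt 2) * s ^ 2) *
        (Real.sqrt 2 - 2 + (2 - Real.sqrt 2) * (2 * s))) / circW s ^ 2

lemma sqrt2_sq : Real.sqrt 2 ^ 2 = 2 := Real.sq_sqrt (by norm_num)

lemma sqrt2_lt_two : Real.sqrt 2 < 2 := by
  nlinarith [sqrt2_sq, Real.sqrt_nonneg 2]

lemma circW_pos (s : ℝ) : 0 < circW s := by
  have h := Real.sqrt_nonneg 2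
  have h2 := sqrt2_lt_two
  have key : 0 ≤ (2 - Real.sqrt 2) * (2 * s - 1) ^ 2 :=
    mul_nonneg (by linarith) (sq_nonneg _)
  have : 4 * circW s = (2 - Real.sqrt 2) * (2 * s - 1) ^ 2 + (2 + Real.sqrt 2) := by
    unfold circW; ring
  linarith

lemma circW_ne (s : ℝ) : circW s ≠ 0 := (circW_pos s).ne'

lemma hasDerivAt_circW (s : ℝ) :
    HasDerivAt circW (Real.sqrt 2 - 2 + (2 - Real.sqrt 2) * (2 * s)) s := by
  have h : HasDerivAt (fun s : ℝ => 1 + (Real.sqrt 2 - 2) * s + (2 - Real.sqrt 2) * s ^ 2)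
      ((Real.sqrt 2 - 2) * 1 + (2 - Real.sqrt 2) * (2 * s ^ 1)) s := by
    exact ((((hasDerivAt_id s).const_mul (Real.sqrt 2 - 2)).const_add 1).add
      ((hasDerivAt_pow 2 s).const_mul (2 - Real.sqrt 2)))
  exact h.congr_deriv (by ring)

lemma hasDerivAt_circX (s : ℝ) : HasDerivAt circX (dX s) s := by
  have hN : HasDerivAt (fun s : ℝ => 1 + (Real.sqrt 2 - 2) * s + (1 - Real.sqrt 2) * s ^ 2)
      (Real.sqrt 2 - 2 + (1 - Real.sqrt 2) * (2 * s)) s := by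
    have h := ((((hasDerivAt_id s).const_mul (Real.sqrt 2 - 2)).const_add 1).add
      ((hasDerivAt_pow 2 s).const_mul (1 - Real.sqrt 2)))
    exact h.congr_deriv (by ring)
  exact hN.div (hasDerivAt_circW s) (circW_ne s)

lemma hasDerivAt_circY (s : ℝ) : HasDerivAt circY (dY s) s := by
  have hN : HasDerivAt (fun s : ℝ => Real.sqrt 2 * s + (1 - Real.sqrt 2) * s ^ 2)
      (Real.sqrt 2 + (1 - Real.sqrt 2) * (2 * s)) s := by
    have h := (((hasDerivAt_id s).const_mul (Real.sqrt 2)).add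
      ((hasDerivAt_pow 2 s).const_mul (1 - Real.sqrt 2)))
    exact h.congr_deriv (by ring)
  exact hN.div (hasDerivAt_circW s) (circW_ne s)

lemma continuous_circW : Continuous circW := by unfold circW; continuity

lemma continuous_circX : Continuous circX := by
  unfold circX; exact Continuous.div (by continuity) continuous_circW circW_ne

lemma continuous_circY : Continuous circY := by
  unfold circY; exact Continuous.div (by continuity) continuous_circW circW_ne

lemma continuous_dX : Continuous dX := by
  unfold dX circW
  exact Continuous.div (by continuity) (by continuity) (fun s => pow_ne_zero 2 (circW_ne s))

lemma continuous_dY : Continuous dY := by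
  unfold dY circW
  exact Continuous.div (by continuity) (by continuity) (fun s => pow_ne_zero 2 (circW_ne s))

/-- primitive of the angular speed -/
noncomputable def circF (s : ℝ) : ℝ :=
  2 * Real.arctan ((Real.sqrt 2 + 1) * s / (2 + Real.sqrt 2 - s))

lemma hasDerivAt_circF (s : ℝ) (hs : s ≤ 1) :
    HasDerivAt circF (circX s * dY s - circY s * dX s) s := by
  have hden : 2 + Real.sqrt 2 - s ≠ 0 := by
    have := Real.sqrt_nonneg 2; linarith
  set a := Real.sqrt 2 with ha
  have hu : HasDerivAt (fun s : ℝ => (a + 1) * s / (2 + a - s))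
      (((a + 1) * (2 + a - s) - (a + 1) * s * (-1)) / (2 + a - s) ^ 2) s := by
    have h1 : HasDerivAt (fun s : ℝ => (a + 1) * s) (a + 1) s := by
      simpa using (hasDerivAt_id s).const_mul (a + 1)
    have h2 : HasDerivAt (fun s : ℝ => 2 + a - s) (-1) s := by
      exact (hasDerivAt_id s).const_sub (2 + a)
    exact (h1.congr_deriv (by ring)).div h2 hden
  have harc := (Real.hasDerivAt_arctan ((a + 1) * s / (2 + a - s))).comp s hu
  have hF := harc.const_mul 2
  have h2 : a ^ 2 = 2 := by rw [ha]; exact sqrt2_sq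
  have hw : circW s ≠ 0 := circW_ne s
  have hpos : 0 < 2 + a - s := by
    have := Real.sqrt_nonneg 2; rw [ha]; linarith
  have hD : (0:ℝ) < (2 + a - s) ^ 2 + ((a + 1) * s) ^ 2 :=
    add_pos_of_pos_of_nonneg (pow_pos hpos 2) (sq_nonneg _)
  have hstep1 : circX s * dY s - circY s * dX s
      = (a + (2 - 2 * a) * s + (2 * a - 2) * s ^ 2) / circW s ^ 2 := by
    simp only [circX, circY, dX, dY, ← ha]
    field_simp
    ring
  have hone : (0:ℝ) < 1 + ((a + 1) * s / (2 + a - s)) ^ 2 :=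
    add_pos_of_pos_of_nonneg one_pos (sq_nonneg _)
  have hstep2 : 2 * (1 / (1 + ((a + 1) * s / (2 + a - s)) ^ 2) *
      (((a + 1) * (2 + a - s) - (a + 1) * s * (-1)) / (2 + a - s) ^ 2))
      = 2 * (a + 1) * (2 + a) / ((2 + a - s) ^ 2 + ((a + 1) * s) ^ 2) := by
    rw [eq_div_iff hD.ne']
    field_simp
    ring
  have hstep3 : 2 * (a + 1) * (2 + a) / ((2 + a - s) ^ 2 + ((a + 1) * s) ^ 2)
      = (a + (2 - 2 * a) * s + (2 * a - 2) * s ^ 2) / circW s ^ 2 := by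
    rw [div_eq_div_iff hD.ne' (pow_ne_zero 2 hw)]
    simp only [circW, ← ha]
    linear_combination (-(2 - 12*s + 24*s^2 - 22*s^3 + 10*s^4 + a - 6*a*s + 9*a*s^2
      - 6*a*s^3 + 4*a*s^4 - 2*a^2*s^2 + 4*a^2*s^3 - 2*a^2*s^4)) * h2
  have heq : 2 * (1 / (1 + ((a + 1) * s / (2 + a - s)) ^ 2) *
      (((a + 1) * (2 + a - s) - (a + 1) * s * (-1)) / (2 + a - s) ^ 2))
      = circX s * dY s - circY s * dX s := by
    rw [hstep2, hstep3, ← hstep1]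
  exact (hF.congr_deriv heq)

/-- The area enclosed by a positively oriented closed curve is −∮ y dx; applied to
the four rational quadratic Bézier quarter-circle arcs (the arc (circX, circY) and
its rotations by 90°, 180° and 270°), the sum of −∫₀¹ yᵢ(s) xᵢ'(s) ds equals π. -/
theorem unit_circle_area_from_bezier_arcs :
    (-∫ s in (0:ℝ)..1, circY s * deriv circX s) +
      (-∫ s in (0:ℝ)..1, circX s * deriv (fun t => -circY t) s) +
      (-∫ s in (0:ℝ)..1, (-circY s) * deriv (fun t => -circX t) s) +
      (-∫ s in (0:ℝ)..1, (-circX s) * deriv circY s) = Real.pi := by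
  have hdX : deriv circX = dX := funext fun s => (hasDerivAt_circX s).deriv
  have hdY : deriv circY = dY := funext fun s => (hasDerivAt_circY s).deriv
  have hIx : IntervalIntegrable (fun s => circX s * dY s) MeasureTheory.volume 0 1 :=
    (continuous_circX.mul continuous_dY).intervalIntegrable 0 1
  have hIy : IntervalIntegrable (fun s => circY s * dX s) MeasureTheory.volume 0 1 :=
    (continuous_circY.mul continuous_dX).intervalIntegrable 0 1
  have key : (∫ s in (0:ℝ)..1, (circX s * dY s - circY s * dX s)) = Real.pi / 2 := by
    rw [intervalIntegral.integral_eq_sub_of_hasDerivAt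
      (f := circF) (f' := fun s => circX s * dY s - circY s * dX s) (fun s hs => by
        refine hasDerivAt_circF s ?_
        rw [Set.uIcc_of_le (by norm_num : (0:ℝ) ≤ 1)] at hs
        exact hs.2)
      (((continuous_circX.mul continuous_dY).sub
        (continuous_circY.mul continuous_dX)).intervalIntegrable 0 1)]
    have h1 : (Real.sqrt 2 + 1) * 1 / (2 + Real.sqrt 2 - 1) = 1 := by
      have : 2 + Real.sqrt 2 - 1 ≠ 0 := by have := Real.sqrt_nonneg 2; linarith
      field_simp
      ring
    rw [circF, circF, h1]
    simp [Real.arctan_one]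
    ring
  have hsub : (∫ s in (0:ℝ)..1, (circX s * dY s - circY s * dX s))
      = (∫ s in (0:ℝ)..1, circX s * dY s) - ∫ s in (0:ℝ)..1, circY s * dX s :=
    intervalIntegral.integral_sub hIx hIy
  have e1 : (∫ s in (0:ℝ)..1, circY s * deriv circX s) = ∫ s in (0:ℝ)..1, circY s * dX s := by
    rw [hdX]
  have e2 : (∫ s in (0:ℝ)..1, circX s * deriv (fun t => -circY t) s)
      = -∫ s in (0:ℝ)..1, circX s * dY s := by
    rw [← intervalIntegral.integral_neg]
    congr 1; funext s
    rw [deriv.fun_neg, hdY]; ring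
  have e3 : (∫ s in (0:ℝ)..1, (-circY s) * deriv (fun t => -circX t) s)
      = ∫ s in (0:ℝ)..1, circY s * dX s := by
    congr 1; funext s
    rw [deriv.fun_neg, hdX]; ring
  have e4 : (∫ s in (0:ℝ)..1, (-circX s) * deriv circY s)
      = -∫ s in (0:ℝ)..1, circX s * dY s := by
    rw [← intervalIntegral.integral_neg, hdY]
    congr 1; funext s; ring
  rw [e1, e2, e3, e4]
  have := key
  rw [hsub] at this
  linarith
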